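/- arXiv:1205.5247 — 3 statements merged into one kernel-verified Lean document; each statement's English description precedes it below -/
import Mathlib

section
/- Two matroids M and M' on the same finite ground set E form a matroid perspective M → M' (i.e., every flat of M' is a flat of M) if and only if for all Y ⊆ X ⊆ E one has r_{M'}(X) − r_{M'}(Y) ≤ r_M(X) − r_M(Y). -/
open Set

/-- `e` is the smallest element of `C`. -/
def SmallestIn {α : Type*} [LinearOrder α] (e : α) (C : Set α) : Prop :=
  e ∈ C ∧ ∀ f ∈ C, e ≤ f

/-- `C` is a circuit of `M`: a minimal dependent set. -/
def IsCircuit {α : Type*} (M : Matroid α) (C : Set α) : Prop :=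
  ¬ M.Indep C ∧ ∀ x ∈ C, M.Indep (C \ {x})

/-- A cocircuit is a circuit of the dual matroid. -/
def IsCocircuit {α : Type*} (M : Matroid α) (C : Set α) : Prop :=
  IsCircuit M✶ C

/-- `P_M(A)`: elements outside `A` that are smallest in some cocircuit avoiding `A`. -/
def Pset {α : Type*} [LinearOrder α] (M : Matroid α) (A : Set α) : Set α :=
  {e | e ∉ A ∧ ∃ C, IsCocircuit M C ∧ C ⊆ Aᶜ ∧ SmallestIn e C}

/-- `Q_M(A)`: elements of `A` that are smallest in some circuit contained in `A`. -/
def Qset {α : Type*} [LinearOrder α] (M : Matroid α) (A : Set α) : Set α :=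
  {e | e ∈ A ∧ ∃ C, IsCircuit M C ∧ C ⊆ A ∧ SmallestIn e C}

/-- Externally active elements of `A`. -/
def ExtSet {α : Type*} [LinearOrder α] (M : Matroid α) (A : Set α) : Set α :=
  {e | e ∉ A ∧ ∃ C, IsCircuit M C ∧ C ⊆ A ∪ {e} ∧ SmallestIn e C}

/-- Internally active elements of `A`. -/
def IntSet {α : Type*} [LinearOrder α] (M : Matroid α) (A : Set α) : Set α :=
  {e | e ∈ A ∧ ∃ C, IsCocircuit M C ∧ C ⊆ Aᶜ ∪ {e} ∧ SmallestIn e C}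

/-- The rank of a set: the largest cardinality of an independent subset. -/
noncomputable def rk {α : Type*} (M : Matroid α) (A : Set α) : ℕ :=
  sSup (Set.ncard '' {I | I ⊆ A ∧ M.Indep I})

/-- Matroid perspective (strong-map / quotient condition, form (MP3)). -/
def Perspective {α : Type*} (M M' : Matroid α) : Prop :=
  ∀ C D : Set α, IsCircuit M C → IsCocircuit M' D → (C ∩ D).ncard ≠ 1

/-- Rank codrop of a subset in a matroid perspective. -/
noncomputable def rcd {α : Type*} (M M' : Matroid α) (A : Set α) : ℕ :=
  ((rk M Set.univ : ℤ) - rk M' Set.univ - ((rk M A : ℤ) - rk M' A)).toNat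


section Aux
variable {α : Type*} [Fintype α] {M : Matroid α} {X Y I J : Set α} {e : α}

lemma rk_bddAbove (M : Matroid α) (X : Set α) :
    BddAbove (Set.ncard '' {I | I ⊆ X ∧ M.Indep I}) := by
  refine ⟨(Set.univ : Set α).ncard, ?_⟩
  rintro n ⟨J, -, rfl⟩
  exact Set.ncard_le_ncard (subset_univ J) (toFinite _)

lemma ncard_le_rk (hJX : J ⊆ X) (hJ : M.Indep J) : J.ncard ≤ rk M X :=
  le_csSup (rk_bddAbove M X) ⟨J, ⟨hJX, hJ⟩, rfl⟩

lemma rk_eq_ncard_of_basis' (hI : M.IsBasis' I X) : rk M X = I.ncard := by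
  refine le_antisymm (csSup_le ⟨I.ncard, ⟨I, ⟨hI.subset, hI.indep⟩, rfl⟩⟩ ?_)
    (ncard_le_rk hI.subset hI.indep)
  rintro n ⟨J, ⟨hJX, hJ⟩, rfl⟩
  obtain ⟨K, hK, hJK⟩ := hJ.subset_isBasis'_of_subset hJX
  have h1 : J.ncard ≤ K.ncard := Set.ncard_le_ncard hJK (toFinite _)
  have h2 : K.ncard = I.ncard := by
    have := hK.encard_eq_encard hI
    simp [Set.ncard_def, this]
  omega

lemma rk_eq_ncard_of_basis (hI : M.IsBasis I X) : rk M X = I.ncard :=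
  rk_eq_ncard_of_basis' hI.isBasis'

lemma rk_mono (h : Y ⊆ X) : rk M Y ≤ rk M X := by
  refine csSup_le ⟨0, ⟨∅, ⟨empty_subset _, M.empty_indep⟩, by simp⟩⟩ ?_
  rintro n ⟨J, ⟨hJY, hJ⟩, rfl⟩
  exact ncard_le_rk (hJY.trans h) hJ

lemma rk_insert_le : rk M (insert e X) ≤ rk M X + 1 := by
  refine csSup_le ⟨0, ⟨∅, ⟨empty_subset _, M.empty_indep⟩, by simp⟩⟩ ?_
  rintro n ⟨J, ⟨hJX, hJ⟩, rfl⟩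
  have h1 : J \ {e} ⊆ X := by
    intro x hx; rcases hJX hx.1 with h | h
    · exact absurd h hx.2
    · exact h
  have h2 : (J \ {e}).ncard ≤ rk M X := ncard_le_rk h1 (hJ.subset diff_subset)
  have h3 : J.ncard ≤ (J \ {e}).ncard + 1 := by
    calc J.ncard ≤ (insert e (J \ {e})).ncard :=
          Set.ncard_le_ncard (by intro x hx; by_cases hxe : x = e <;> simp [hxe, hx]) (toFinite _)
      _ ≤ (J \ {e}).ncard + 1 := Set.ncard_insert_le _ _
  omega

lemma rk_insert_of_mem_closure (hE : M.E = Set.univ) (he : e ∈ M.closure X) :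
    rk M (insert e X) = rk M X := by
  obtain ⟨I, hI⟩ := M.exists_isBasis X (by rw [hE]; exact subset_univ _)
  have hcl : M.closure I = M.closure X := hI.closure_eq_closure
  have hb : M.IsBasis I (insert e X) := by
    refine hI.indep.isBasis_of_subset_of_subset_closure (hI.subset.trans (subset_insert _ _)) ?_
    rw [hcl]
    exact insert_subset he (M.subset_closure X (by rw [hE]; exact subset_univ _))
  rw [rk_eq_ncard_of_basis hb, rk_eq_ncard_of_basis hI]

lemma rk_insert_of_not_mem_closure (hE : M.E = Set.univ) (he : e ∉ M.closure X) :
    rk M X + 1 ≤ rk M (insert e X) := by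
  obtain ⟨I, hI⟩ := M.exists_isBasis X (by rw [hE]; exact subset_univ _)
  have heI : e ∉ I := fun h => he (M.subset_closure X (by rw [hE]; exact subset_univ _) (hI.subset h))
  have hi : M.Indep (insert e I) := by
    rw [Matroid.insert_indep_iff]
    refine ⟨hI.indep, fun _ => ⟨by rw [hE]; trivial, ?_⟩⟩
    rw [hI.closure_eq_closure]; exact he
  have := ncard_le_rk (X := insert e X) (insert_subset_insert hI.subset) hi
  rw [Set.ncard_insert_of_notMem heI (toFinite _)] at this
  rwa [rk_eq_ncard_of_basis hI]

omit [Fintype α] in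
lemma closure_flat' (M : Matroid α) (X : Set α) : M.IsFlat (M.closure X) := by
  refine ⟨fun I Z hI hZ => ?_, M.closure_subset_ground X⟩
  have := hZ.subset_closure
  rwa [hI.closure_eq_closure, M.closure_closure] at this

end Aux

theorem quotient_iff_rank_difference_le {α : Type*} [Fintype α]
    (M M' : Matroid α) (hE : M.E = Set.univ) (hE' : M'.E = Set.univ) :
    (∀ F : Set α, M'.IsFlat F → M.IsFlat F) ↔
      (∀ X Y : Set α, Y ⊆ X →
        (rk M' X : ℤ) - rk M' Y ≤ (rk M X : ℤ) - rk M Y) := by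
  constructor
  · intro h X Y hYX
    have hcl : ∀ Z : Set α, M.closure Z ⊆ M'.closure Z := by
      intro Z
      have hF : M.IsFlat (M'.closure Z) := h _ (closure_flat' M' Z)
      have hZ : Z ⊆ M'.closure Z := M'.subset_closure Z (by rw [hE']; exact subset_univ _)
      have := M.closure_subset_closure hZ
      rwa [hF.closure] at this
    have step : ∀ (Z : Set α) (e : α),
        (rk M' (insert e Z) : ℤ) - rk M' Z ≤ (rk M (insert e Z) : ℤ) - rk M Z := by
      intro Z e
      by_cases hem : e ∈ M.closure Z
      · rw [rk_insert_of_mem_closure hE hem, rk_insert_of_mem_closure hE' (hcl Z hem)]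
        simp
      · have h1 := rk_insert_of_not_mem_closure hE hem
        have h2 : rk M' (insert e Z) ≤ rk M' Z + 1 := rk_insert_le
        have h3 : rk M' Z ≤ rk M' (insert e Z) := rk_mono (subset_insert _ _)
        push_cast
        omega
    have main : ∀ (n : ℕ) (X Y : Set α), Y ⊆ X → (X \ Y).ncard ≤ n →
        (rk M' X : ℤ) - rk M' Y ≤ (rk M X : ℤ) - rk M Y := by
      intro n
      induction n with
      | zero =>
        intro X Y hYX hc
        have : X \ Y = ∅ := by
          rw [← Set.ncard_eq_zero (toFinite _)]; omega
        have hXY : X = Y := (diff_eq_empty.mp this).antisymm hYX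
        rw [hXY]; simp
      | succ n ih =>
        intro X Y hYX hc
        by_cases hne : X \ Y = ∅
        · have hXY : X = Y := (diff_eq_empty.mp hne).antisymm hYX
          rw [hXY]; simp
        · obtain ⟨e, he⟩ := nonempty_iff_ne_empty.mpr hne
          have hY' : insert e Y ⊆ X := insert_subset he.1 hYX
          have hd : X \ insert e Y = (X \ Y) \ {e} := by
            ext x; simp [and_comm, and_assoc, and_left_comm]
          have hcard : (X \ insert e Y).ncard ≤ n := by
            rw [hd]
            have := Set.ncard_diff_singleton_lt_of_mem he (toFinite _)
            have h2 : ((X \ Y) \ {e}).ncard ≤ (X \ Y).ncard - 1 := by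
              rw [Set.ncard_diff_singleton_of_mem he]
            omega
          have h1 := ih X (insert e Y) hY' hcard
          have h2 := step Y e
          linarith
    exact main ((X \ Y).ncard) X Y hYX le_rfl
  · intro h F hF
    refine ⟨fun I Z hIF hIZ => ?_, by rw [hE]; exact subset_univ _⟩
    have hsub : Z ⊆ M.closure F := by
      have := hIZ.subset_closure
      rwa [hIF.closure_eq_closure] at this
    have hclF : M.closure F ⊆ F := by
      intro e he
      by_contra heF
      have he' : e ∉ M'.closure F := by rw [hF.closure]; exact heF
      have h1 : rk M (insert e F) = rk M F := rk_insert_of_mem_closure hE he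
      have h2 : rk M' F + 1 ≤ rk M' (insert e F) := rk_insert_of_not_mem_closure hE' he'
      have := h (insert e F) F (subset_insert _ _)
      rw [h1] at this
      push_cast at this
      omega
    exact hsub.trans hclF
end

section
/- If M → M' is a matroid perspective (M' a quotient of M on the same ground set E), then (M')* → M* is a matroid perspective, i.e., every flat of M* is a flat of (M')*. -/
open Set

private lemma aux_closure_flat {α : Type*} (M : Matroid α) (X : Set α) :
    M.IsFlat (M.closure X) := by
  rw [Matroid.closure_def]
  have hne : Nonempty {F : Set α // M.IsFlat F ∧ X ∩ M.E ⊆ F} :=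
    ⟨⟨M.E, M.ground_isFlat, inter_subset_right⟩⟩
  have h := Matroid.IsFlat.iInter (M := M)
    (Fs := fun F : {F : Set α // M.IsFlat F ∧ X ∩ M.E ⊆ F} => F.1) (fun F => F.2.1)
  convert h using 1
  rw [sInter_eq_iInter]
  rfl

/-- If `e ∉ F` and `e` is not in the closure of the "rest", then `e ∈ M✶.closure F`. -/
private lemma aux_one {α : Type*} (M : Matroid α) (hE : M.E = Set.univ)
    (F : Set α) (e : α) (heF : e ∉ F)
    (hecl : e ∉ M.closure (Fᶜ \ {e})) : e ∈ M✶.closure F := by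
  set X := Fᶜ \ {e} with hX
  obtain ⟨I, hI⟩ := M.exists_isBasis X (by rw [hE]; exact subset_univ _)
  have heI : e ∉ I := fun h => (hI.subset h).2 rfl
  have hins : M.Indep (insert e I) := by
    rw [← hI.closure_eq_closure] at hecl
    by_contra hcon
    exact hecl (hI.indep.mem_closure_iff.2
      (Or.inl ⟨hcon, by rw [hE]; exact subset_univ _⟩))
  obtain ⟨B, hB, hIB⟩ := hins.exists_isBase_superset
  have heB : e ∈ B := hIB (mem_insert e I)
  have hIB' : I ⊆ B := (subset_insert e I).trans hIB
  set J := F \ B with hJ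
  have hJi : M✶.Indep J := by
    have hBd : M✶.IsBase (M.E \ B) := hB.compl_isBase_dual
    exact hBd.indep.subset (fun x hx => ⟨by rw [hE]; exact mem_univ x, hx.2⟩)
  have heJ : e ∉ J := fun hh => heF hh.1
  have hdep : M✶.Dep (insert e J) := by
    rw [Matroid.dep_iff]
    refine ⟨fun hind => ?_, by rw [Matroid.dual_ground, hE]; exact subset_univ _⟩
    rw [← Matroid.coindep_def,
      Matroid.coindep_iff_compl_spanning
        (by rw [hE]; exact subset_univ _)] at hind
    -- hind : M.Spanning (M.E \ insert e J)
    have hsub : M.E \ insert e J ⊆ (F ∩ B) ∪ X := by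
      intro x hx
      obtain ⟨-, hx2⟩ := hx
      by_cases hxF : x ∈ F
      · refine Or.inl ⟨hxF, ?_⟩
        by_contra hxB
        exact hx2 (Or.inr ⟨hxF, hxB⟩)
      · refine Or.inr ⟨hxF, ?_⟩
        intro hxe
        exact hx2 (Or.inl hxe)
    have hsp1 : M.E ⊆ M.closure ((F ∩ B) ∪ X) := by
      rw [← hind.closure_eq]
      exact M.closure_subset_closure hsub
    have hsp2 : M.closure ((F ∩ B) ∪ X) = M.closure ((F ∩ B) ∪ I) := by
      rw [← M.closure_union_closure_right_eq (F ∩ B) X, ← hI.closure_eq_closure,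
        M.closure_union_closure_right_eq]
    have hBe : (F ∩ B) ∪ I ⊆ B \ {e} := by
      rintro x (⟨hxF, hxB⟩ | hxI)
      · exact ⟨hxB, fun hxe => heF (hxe ▸ hxF)⟩
      · exact ⟨hIB' hxI, fun hxe => heI (hxe ▸ hxI)⟩
    have hsp3 : M.Spanning (B \ {e}) := by
      rw [Matroid.spanning_iff_closure_eq (by rw [hE]; exact subset_univ _)]
      refine subset_antisymm (M.closure_subset_ground _) ?_
      calc M.E ⊆ M.closure ((F ∩ B) ∪ I) := hsp2 ▸ hsp1
        _ ⊆ M.closure (B \ {e}) := M.closure_subset_closure hBe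
    obtain ⟨B₀, hB₀, hB₀sub⟩ := hsp3.exists_isBase_subset
    have : B₀ = B := hB₀.eq_of_subset_isBase hB (hB₀sub.trans diff_subset)
    exact (hB₀sub (this ▸ heB)).2 rfl
  have : e ∈ M✶.closure J := hJi.mem_closure_iff.2 (Or.inl hdep)
  exact M✶.closure_subset_closure diff_subset this

/-- If `e ∉ F` and `e` is in the closure of the "rest", then `e ∉ M✶.closure F`. -/
private lemma aux_not_both {α : Type*} (M : Matroid α) (hE : M.E = Set.univ)
    (F : Set α) (e : α) (heF : e ∉ F)
    (hecl : e ∈ M.closure (Fᶜ \ {e})) : e ∉ M✶.closure F := by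
  intro hdual
  obtain ⟨J, hJ⟩ := M✶.exists_isBasis F (by rw [Matroid.dual_ground, hE]; exact subset_univ _)
  rw [← hJ.closure_eq_closure] at hdual
  have heJ : e ∉ J := fun hh => heF (hJ.subset hh)
  have hdep : M✶.Dep (insert e J) := by
    rcases hJ.indep.mem_closure_iff.1 hdual with hd | hh
    · exact hd
    · exact absurd hh heJ
  obtain ⟨B', hB', hJB'⟩ := hJ.exists_isBase
  have hB : M.IsBase (M.E \ B') := hB'.compl_isBase_of_dual
  have hJsub : J ⊆ B' := hJB' ▸ inter_subset_left
  have hsp : M.Spanning (M.E \ insert e J) := by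
    have hBe : (M.E \ B') \ {e} ⊆ M.E \ insert e J := by
      rintro x ⟨⟨hx1, hx2⟩, hx3⟩
      refine ⟨hx1, ?_⟩
      rintro (rfl | hxJ)
      · exact hx3 rfl
      · exact hx2 (hJsub hxJ)
    have hXs : Fᶜ \ {e} ⊆ M.E \ insert e J := by
      rintro x ⟨hx1, hx2⟩
      refine ⟨by rw [hE]; exact mem_univ x, ?_⟩
      rintro (rfl | hxJ)
      · exact hx2 rfl
      · exact hx1 (hJ.subset hxJ)
    have h1 : (M.E \ B') \ {e} ⊆ M.closure (M.E \ insert e J) :=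
      hBe.trans (M.subset_closure _ diff_subset)
    have h2 : e ∈ M.closure (M.E \ insert e J) :=
      M.closure_subset_closure hXs hecl
    have h3 : M.E \ B' ⊆ M.closure (M.E \ insert e J) := by
      intro x hx
      by_cases hxe : x = e
      · exact hxe ▸ h2
      · exact h1 ⟨hx, hxe⟩
    rw [Matroid.spanning_iff_closure_eq diff_subset]
    refine subset_antisymm (M.closure_subset_ground _) ?_
    calc M.E = M.closure (M.E \ B') := hB.closure_eq.symm
      _ ⊆ M.closure (M.closure (M.E \ insert e J)) := M.closure_subset_closure h3
      _ = M.closure (M.E \ insert e J) := M.closure_closure _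
  have hind : M✶.Indep (insert e J) := by
    rw [← Matroid.coindep_def,
      Matroid.coindep_iff_compl_spanning (by rw [hE]; exact subset_univ _)]
    exact hsp
  exact hdep.not_indep hind

theorem perspective_dual {α : Type*} [Fintype α]
    (M M' : Matroid α) (hE : M.E = Set.univ) (hE' : M'.E = Set.univ)
    (h : ∀ F : Set α, M'.IsFlat F → M.IsFlat F) :
    ∀ F : Set α, M✶.IsFlat F → M'✶.IsFlat F := by
  have hcl : ∀ X : Set α, M.closure X ⊆ M'.closure X := by
    intro X
    have hF : M.IsFlat (M'.closure X) := h _ (aux_closure_flat M' X)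
    have hXs : X ⊆ M'.closure X := M'.subset_closure X (by rw [hE']; exact subset_univ _)
    calc M.closure X ⊆ M.closure (M'.closure X) := M.closure_subset_closure hXs
      _ = M'.closure X := hF.closure
  intro F hF
  have hclF : M'✶.closure F = F := by
    refine subset_antisymm ?_ (M'✶.subset_closure F
      (by rw [Matroid.dual_ground, hE']; exact subset_univ _))
    intro e he
    by_contra heF
    have h2 : e ∈ M.closure (Fᶜ \ {e}) := by
      by_contra h3
      exact heF (hF.closure ▸ aux_one M hE F e heF h3)
    exact aux_not_both M' hE' F e heF (hcl _ h2) he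
  exact hclF ▸ aux_closure_flat M'✶ F
end

section
/- Let M → M' be a matroid perspective on a finite linearly ordered set E, and A ⊆ E. Define B = (A ∪ P_{M'}(A)) \ Q_M(A), where P_{M'}(A) = {e ∈ E\A : e smallest in some cocircuit of M' contained in E\A} and Q_M(A) = {e ∈ A : e smallest in some circuit of M contained in A}. Then B is independent in M and spanning in M'. -/
open Set

lemma exists_circuit_subset {α : Type*} [Fintype α] (M : Matroid α)
    {B : Set α} (hB : ¬ M.Indep B) : ∃ C ⊆ B, IsCircuit M C := by
  classical
  set S : Set (Set α) := {C | C ⊆ B ∧ ¬ M.Indep C} with hS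
  have hBS : B ∈ S := ⟨subset_rfl, hB⟩
  obtain ⟨C, hCS, hmin⟩ := Set.exists_min_image S Set.ncard (Set.toFinite S) ⟨B, hBS⟩
  refine ⟨C, hCS.1, hCS.2, fun x hx => ?_⟩
  by_contra hind
  have hlt : (C \ {x}).ncard < C.ncard :=
    Set.ncard_diff_singleton_lt_of_mem hx (Set.toFinite C)
  have hmem : C \ {x} ∈ S := ⟨Set.diff_subset.trans hCS.1, hind⟩
  exact absurd (hmin _ hmem) (not_le.mpr hlt)

lemma second_elem {α : Type*} {M M' : Matroid α} (h : Perspective M M')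
    {C D : Set α} (hC : IsCircuit M C) (hD : IsCocircuit M' D) {g : α} (hg : g ∈ C ∩ D) :
    ∃ x ∈ C ∩ D, x ≠ g := by
  by_contra hcon
  push_neg at hcon
  apply h C D hC hD
  have hs : C ∩ D = {g} := Set.eq_singleton_iff_unique_mem.mpr ⟨hg, fun x hx => hcon x hx⟩
  rw [hs, Set.ncard_singleton]

theorem fMM'_indep_spanning {α : Type*} [Fintype α] [LinearOrder α]
    (M M' : Matroid α) (hE : M.E = Set.univ) (hE' : M'.E = Set.univ)
    (h : Perspective M M') (A : Set α) :
    M.Indep ((A ∪ Pset M' A) \ Qset M A) ∧ M'.Spanning ((A ∪ Pset M' A) \ Qset M A) := by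
  set B : Set α := (A ∪ Pset M' A) \ Qset M A with hB
  have hQA : Qset M A ⊆ A := fun x hx => hx.1
  have hPA : Pset M' A ⊆ Aᶜ := fun x hx => hx.1
  constructor
  · -- Independence in M
    by_contra hind
    obtain ⟨C, hCB, hCcirc⟩ := exists_circuit_subset M hind
    -- C \ A is nonempty
    have hCA : ¬ C ⊆ A := by
      intro hCA
      have hCne : C.Nonempty := by
        rcases C.eq_empty_or_nonempty with rfl | hne
        · exact absurd M.empty_indep hCcirc.1
        · exact hne
      obtain ⟨e, heC, hemin⟩ := Set.exists_min_image C id (Set.toFinite C) hCne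
      have heQ : e ∈ Qset M A := ⟨hCA heC, C, hCcirc, hCA, heC, hemin⟩
      exact (hCB heC).2 heQ
    have hne : (C \ A).Nonempty := Set.nonempty_of_not_subset (by
      intro hsub; exact hCA hsub)
    obtain ⟨g, hgCA, hgmax⟩ := Set.exists_max_image (C \ A) id (Set.toFinite _) hne
    -- g ∈ Pset M' A
    have hgP : g ∈ Pset M' A := by
      have := (hCB hgCA.1).1
      rcases this with hgA | hgP
      · exact absurd hgA hgCA.2
      · exact hgP
    obtain ⟨hgA, D, hDcoc, hDA, hgD, hgDmin⟩ := hgP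
    obtain ⟨x, hxCD, hxg⟩ := second_elem h hCcirc hDcoc ⟨hgCA.1, hgD⟩
    have hx1 : x ∈ C \ A := ⟨hxCD.1, hDA hxCD.2⟩
    have hle : x ≤ g := hgmax x hx1
    have hge : g ≤ x := hgDmin x hxCD.2
    exact hxg (le_antisymm hle hge)
  · -- Spanning in M'
    have hBE : B ⊆ M'.E := by rw [hE']; exact Set.subset_univ B
    rw [Matroid.spanning_iff_compl_coindep hBE, Matroid.coindep_def]
    by_contra hind
    obtain ⟨D, hDB, hDcoc⟩ := exists_circuit_subset M'✶ hind
    have hDBc : D ⊆ Bᶜ := by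
      intro x hx
      have := hDB hx
      rw [hE'] at this
      exact fun hxB => this.2 hxB
    by_cases hDA : D ⊆ Aᶜ
    · -- min D ∈ Pset, contradiction with D ⊆ Bᶜ
      have hDne : D.Nonempty := by
        rcases D.eq_empty_or_nonempty with rfl | hne
        · exact absurd M'✶.empty_indep hDcoc.1
        · exact hne
      obtain ⟨e, heD, hemin⟩ := Set.exists_min_image D id (Set.toFinite D) hDne
      have heP : e ∈ Pset M' A := ⟨hDA heD, D, hDcoc, hDA, heD, hemin⟩
      have heB : e ∈ B := ⟨Or.inr heP, fun hq => (hPA heP) (hQA hq)⟩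
      exact hDBc heD heB
    · -- D meets A; max of D ∩ A is in Qset
      have hne : (D ∩ A).Nonempty := by
        obtain ⟨x, hxD, hxA⟩ := Set.not_subset.mp hDA
        exact ⟨x, hxD, not_not.mp hxA⟩
      obtain ⟨g, hgDA, hgmax⟩ := Set.exists_max_image (D ∩ A) id (Set.toFinite _) hne
      have hgQ : g ∈ Qset M A := by
        have hgB : g ∉ B := hDBc hgDA.1
        by_contra hq
        exact hgB ⟨Or.inl hgDA.2, hq⟩
      obtain ⟨hgA, C, hCcirc, hCA, hgC, hgCmin⟩ := hgQ
      obtain ⟨x, hxCD, hxg⟩ := second_elem h hCcirc hDcoc ⟨hgC, hgDA.1⟩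
      have hle : x ≤ g := hgmax x ⟨hxCD.2, hCA hxCD.1⟩
      have hge : g ≤ x := hgCmin x hxCD.1
      exact hxg (le_antisymm hle hge)
end
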